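/- Certificate of optimality: let Q ∈ Sym(dn), R* ∈ O(d)^n, and Λ* = SymBlockDiag_d(Q R*ᵀ R*). If C := Q − Λ* ⪰ 0 and (Q − Λ*) R*ᵀ = 0, then Z* = R*ᵀ R* is a minimizer of the SDP min{tr(Q Z) : Z ⪰ 0, BDiag_d(Z) = Diag(I_d,…,I_d)}. -/

import Mathlib

open Matrix

/-- The Gram matrix `Rᵀ R ∈ ℝ^{dn×dn}` of a block matrix `R = (R₁ ⋯ Rₙ) ∈ ℝ^{d×dn}`. -/
def gram {d n : ℕ} (R : Fin n → Matrix (Fin d) (Fin d) ℝ) :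
    Matrix (Fin n × Fin d) (Fin n × Fin d) ℝ :=
  Matrix.of fun p q => ((R p.1)ᵀ * R q.1) p.2 q.2

/-- The symmetrized `d×d` block-diagonal of a `dn×dn` matrix. -/
noncomputable def symBlockDiag {d n : ℕ} (M : Matrix (Fin n × Fin d) (Fin n × Fin d) ℝ) :
    Matrix (Fin n × Fin d) (Fin n × Fin d) ℝ :=
  Matrix.of fun p q => if p.1 = q.1 then (M p q + M q p) / 2 else 0

/-- The transpose `Rᵀ ∈ ℝ^{dn×d}` of a block matrix `R = (R₁ ⋯ Rₙ) ∈ ℝ^{d×dn}`. -/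
def blockTranspose {d n : ℕ} (R : Fin n → Matrix (Fin d) (Fin d) ℝ) :
    Matrix (Fin n × Fin d) (Fin d) ℝ :=
  Matrix.of fun p c => R p.1 c p.2

/-- Feasibility for the SDP: `Z ⪰ 0` with each `d×d` diagonal block equal to `I_d`. -/
def SDPFeasible {d n : ℕ} (Z : Matrix (Fin n × Fin d) (Fin n × Fin d) ℝ) : Prop :=
  Z.PosSemidef ∧ ∀ (i : Fin n) (a b : Fin d), Z (i, a) (i, b) = (1 : Matrix (Fin d) (Fin d) ℝ) a b

lemma trace_nonneg_of_posSemidef {m : Type*} [Fintype m] [DecidableEq m]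
    {A : Matrix m m ℝ} (hA : A.PosSemidef) : 0 ≤ A.trace := by
  apply Finset.sum_nonneg
  intro i _
  exact hA.diag_nonneg

lemma trace_mul_nonneg {m : Type*} [Fintype m] [DecidableEq m]
    {A B : Matrix m m ℝ} (hA : A.PosSemidef) (hB : B.PosSemidef) :
    0 ≤ (A * B).trace := by
  obtain ⟨W, rfl⟩ : ∃ W : Matrix m m ℝ, B = Wᴴ * W := by
    open scoped MatrixOrder in
    exact CStarAlgebra.nonneg_iff_eq_star_mul_self.mp hB.nonneg
  rw [← mul_assoc, trace_mul_cycle]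
  exact trace_nonneg_of_posSemidef (hA.mul_mul_conjTranspose_same W)

lemma gram_eq {d n : ℕ} (R : Fin n → Matrix (Fin d) (Fin d) ℝ) :
    gram R = blockTranspose R * (blockTranspose R)ᵀ := by
  ext p q
  simp [_root_.gram, blockTranspose, Matrix.mul_apply]

lemma gram_posSemidef {d n : ℕ} (R : Fin n → Matrix (Fin d) (Fin d) ℝ) :
    (gram R).PosSemidef := by
  rw [gram_eq]
  have := Matrix.posSemidef_conjTranspose_mul_self ((blockTranspose R)ᵀ)
  simpa using this

lemma trace_symBlockDiag_mul {d n : ℕ}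
    (M Z : Matrix (Fin n × Fin d) (Fin n × Fin d) ℝ)
    (hZ : ∀ (i : Fin n) (a b : Fin d), Z (i, a) (i, b) = (1 : Matrix (Fin d) (Fin d) ℝ) a b) :
    (symBlockDiag M * Z).trace = (symBlockDiag M).trace := by
  rw [Matrix.trace, Matrix.trace]
  apply Finset.sum_congr rfl
  rintro ⟨i, a⟩ -
  rw [Matrix.diag_apply, Matrix.mul_apply, Fintype.sum_prod_type]
  rw [Finset.sum_eq_single i]
  · simp only [symBlockDiag, Matrix.of_apply, if_pos rfl, hZ, Matrix.one_apply, Matrix.diag_apply]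
    rw [Finset.sum_eq_single a] <;> simp +contextual [eq_comm]
  · intro j _ hj
    simp [symBlockDiag, Ne.symm hj]
  · simp

/-- Certificate of optimality: if `C = Q − Λ* ⪰ 0` and `(Q − Λ*) R*ᵀ = 0` for
`Λ* = SymBlockDiag_d(Q R*ᵀ R*)`, then `Z* = R*ᵀ R*` minimizes the SDP. -/
theorem certificate_of_optimality {d n : ℕ}
    (Q : Matrix (Fin n × Fin d) (Fin n × Fin d) ℝ) (hQ : Q.IsSymm)
    (R : Fin n → Matrix (Fin d) (Fin d) ℝ)
    (hR : ∀ i, (R i)ᵀ * R i = 1)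
    (hC : (Q - symBlockDiag (Q * gram R)).PosSemidef)
    (hfo : (Q - symBlockDiag (Q * gram R)) * blockTranspose R = 0) :
    ∀ Z : Matrix (Fin n × Fin d) (Fin n × Fin d) ℝ,
      SDPFeasible Z → (Q * gram R).trace ≤ (Q * Z).trace := by
  rintro Z ⟨hZpsd, hZdiag⟩
  set Λ := symBlockDiag (Q * gram R) with hΛ
  have hCg : (Q - Λ) * gram R = 0 := by
    rw [gram_eq, ← Matrix.mul_assoc, hfo, Matrix.zero_mul]
  have hgdiag : ∀ (i : Fin n) (a b : Fin d),
      gram R (i, a) (i, b) = (1 : Matrix (Fin d) (Fin d) ℝ) a b := by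
    intro i a b
    simp [_root_.gram, hR i]
  have hsplit : ∀ W : Matrix (Fin n × Fin d) (Fin n × Fin d) ℝ,
      (Q * W).trace = ((Q - Λ) * W).trace + (Λ * W).trace := by
    intro W
    rw [← Matrix.trace_add, ← add_mul, sub_add_cancel]
  rw [hsplit Z, hsplit (gram R), hCg, Matrix.trace_zero, zero_add,
    trace_symBlockDiag_mul _ _ hZdiag, trace_symBlockDiag_mul _ _ hgdiag]
  have := trace_mul_nonneg hC hZpsd
  linarith
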